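/- In ℝ⁴ identified with the Hamilton quaternions, the origami set M(U) with seed points {0,1} and direction set U = {1, i, (i−1)/√2, j, (j−1)/√2, (1+i+j+k)/2, (1−i−j−k)/2} equals the Hurwitz order ℤ + ℤi + ℤj + ℤ(1+i+j+k)/2. -/

import Mathlib

noncomputable section

open scoped Quaternion

/-- The intersection point of the line through `p` with direction `α` and the line
through `q` with direction `β`: `z` lies on both lines and is the unique such point. -/
def OrigamiInter {V : Type*} [AddCommGroup V] [Module ℝ V]
    (p q α β z : V) : Prop :=
  (∃ r s : ℝ, z = p + r • α ∧ z = q + s • β) ∧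
  ∀ z', (∃ r s : ℝ, z' = p + r • α ∧ z' = q + s • β) → z' = z

/-- Iterated origami construction with seed points `{0, e}` and direction set `U`. -/
def Mseq {V : Type*} [AddCommGroup V] [Module ℝ V] (U : Set V) (e : V) : ℕ → Set V
  | 0 => {0, e}
  | k + 1 => {z | ∃ p ∈ Mseq U e k, ∃ q ∈ Mseq U e k, ∃ α ∈ U, ∃ β ∈ U,
      OrigamiInter p q α β z}

/-- The origami set `M(U)` with seed points `{0, e}`. -/
def MU {V : Type*} [AddCommGroup V] [Module ℝ V] (U : Set V) (e : V) : Set V :=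
  ⋃ k, Mseq U e k

/-- The first standard basis vector of `ℝⁿ`, playing the role of `1`. -/
def uno (n : ℕ) : EuclideanSpace ℝ (Fin (n + 1)) := EuclideanSpace.single 0 1

def qi : ℍ[ℝ] := ⟨0, 1, 0, 0⟩
def qj : ℍ[ℝ] := ⟨0, 0, 1, 0⟩
def qk : ℍ[ℝ] := ⟨0, 0, 0, 1⟩

/-- The Hurwitz element (1+i+j+k)/2. -/
def hur : ℍ[ℝ] := (2 : ℝ)⁻¹ • (1 + qi + qj + qk)


namespace Origami14

open Quaternion QuaternionAlgebra

noncomputable def si : ℝ := (Real.sqrt 2)⁻¹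

def u3 : ℍ[ℝ] := (Real.sqrt 2)⁻¹ • (qi - 1)
def u5 : ℍ[ℝ] := (Real.sqrt 2)⁻¹ • (qj - 1)
def u7 : ℍ[ℝ] := (2 : ℝ)⁻¹ • (1 - qi - qj - qk)

def U14 : Set ℍ[ℝ] := {1, qi, u3, qj, u5, hur, u7}

def L : Set ℍ[ℝ] := {z | ∃ a b c d : ℤ,
    z = (a : ℝ) • 1 + (b : ℝ) • qi + (c : ℝ) • qj + (d : ℝ) • hur}

lemma si_pos : 0 < si := by
  unfold si
  have : (0:ℝ) < Real.sqrt 2 := Real.sqrt_pos.mpr (by norm_num)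
  positivity

lemma si_ne : si ≠ 0 := ne_of_gt si_pos

lemma s2si : Real.sqrt 2 * si = 1 := by
  unfold si
  exact mul_inv_cancel₀ (by positivity)

def quat (x y z w : ℝ) : ℍ[ℝ] := ⟨x, y, z, w⟩

@[simp] lemma re_mk (x y z w : ℝ) : (quat x y z w).re = x := rfl
@[simp] lemma imI_mk (x y z w : ℝ) : (quat x y z w).imI = y := rfl
@[simp] lemma imJ_mk (x y z w : ℝ) : (quat x y z w).imJ = z := rfl
@[simp] lemma imK_mk (x y z w : ℝ) : (quat x y z w).imK = w := rfl

lemma qeq_iff (x y : ℍ[ℝ]) :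
    x = y ↔ x.re = y.re ∧ x.imI = y.imI ∧ x.imJ = y.imJ ∧ x.imK = y.imK :=
  ⟨fun h => by subst h; exact ⟨rfl, rfl, rfl, rfl⟩,
   fun ⟨h1, h2, h3, h4⟩ => QuaternionAlgebra.ext h1 h2 h3 h4⟩

lemma qsmul (r : ℝ) (x : ℍ[ℝ]) :
    r • x = quat (r * x.re) (r * x.imI) (r * x.imJ) (r * x.imK) := rfl

lemma qadd (x y : ℍ[ℝ]) :
    x + y = quat (x.re + y.re) (x.imI + y.imI) (x.imJ + y.imJ) (x.imK + y.imK) := rfl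

lemma one_mk : (1 : ℍ[ℝ]) = quat 1 0 0 0 := rfl
lemma qi_mk : qi = quat 0 1 0 0 := rfl
lemma qj_mk : qj = quat 0 0 1 0 := rfl
lemma qk_mk : qk = quat 0 0 0 1 := rfl
lemma qsub (x y : ℍ[ℝ]) :
    x - y = quat (x.re - y.re) (x.imI - y.imI) (x.imJ - y.imJ) (x.imK - y.imK) := rfl

lemma u3_mk : u3 = quat (-si) si 0 0 := by
  unfold u3 si
  rw [qeq_iff]
  refine ⟨?_, ?_, ?_, ?_⟩ <;> simp [qi_mk, one_mk, qsub, qsmul, smul_eq_mul]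

lemma u5_mk : u5 = quat (-si) 0 si 0 := by
  unfold u5 si
  rw [qeq_iff]
  refine ⟨?_, ?_, ?_, ?_⟩ <;> simp [qj_mk, one_mk, qsub, qsmul, smul_eq_mul]

lemma hur_mk : hur = quat 2⁻¹ 2⁻¹ 2⁻¹ 2⁻¹ := by
  unfold hur
  rw [qeq_iff]
  refine ⟨?_, ?_, ?_, ?_⟩ <;> simp [qi_mk, qj_mk, qk_mk, one_mk, qadd, qsmul, smul_eq_mul]

lemma u7_mk : u7 = quat 2⁻¹ (-2⁻¹) (-2⁻¹) (-2⁻¹) := by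
  unfold u7
  rw [qeq_iff]
  refine ⟨?_, ?_, ?_, ?_⟩ <;> simp [qi_mk, qj_mk, qk_mk, one_mk, qsub, qsmul, smul_eq_mul] <;> norm_num

lemma u7_eq : u7 = 1 - hur := by
  rw [u7_mk, hur_mk, qeq_iff]
  refine ⟨?_, ?_, ?_, ?_⟩ <;> simp [one_mk, qsub] <;> norm_num

lemma one14_ne : (1 : ℍ[ℝ]) ≠ 0 := by
  intro hh; have h2 := congrArg QuaternionAlgebra.re hh; simp at h2
lemma qi_ne : qi ≠ 0 := by
  intro hh; have h2 := congrArg QuaternionAlgebra.imI hh; rw [qi_mk] at h2; simp at h2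
lemma qj_ne : qj ≠ 0 := by
  intro hh; have h2 := congrArg QuaternionAlgebra.imJ hh; rw [qj_mk] at h2; simp at h2
lemma u3_ne : u3 ≠ 0 := by
  intro hh; have h2 := congrArg QuaternionAlgebra.imI hh; rw [u3_mk] at h2; simp at h2
  exact si_ne h2
lemma u5_ne : u5 ≠ 0 := by
  intro hh; have h2 := congrArg QuaternionAlgebra.imJ hh; rw [u5_mk] at h2; simp at h2
  exact si_ne h2
lemma hur_ne : hur ≠ 0 := fun hh => by
  have := congrArg QuaternionAlgebra.re hh
  rw [hur_mk] at this
  norm_num at this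
lemma u7_ne : u7 ≠ 0 := fun hh => by
  have := congrArg QuaternionAlgebra.re hh
  rw [u7_mk] at this
  norm_num at this

lemma L_eq_mk (a b c d : ℤ) :
    (a : ℝ) • (1:ℍ[ℝ]) + (b : ℝ) • qi + (c : ℝ) • qj + (d : ℝ) • hur
      = quat ((a:ℝ) + d/2) ((b:ℝ) + d/2) ((c:ℝ) + d/2) ((d:ℝ)/2) := by
  rw [qeq_iff]
  refine ⟨?_, ?_, ?_, ?_⟩ <;>
    simp only [one_mk, qi_mk, qj_mk, hur_mk, qsmul, qadd, re_mk, imI_mk, imJ_mk, imK_mk] <;> ring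

lemma memL_iff_mk {z : ℍ[ℝ]} : z ∈ L ↔ ∃ a b c d : ℤ,
    z = quat ((a:ℝ) + d/2) ((b:ℝ) + d/2) ((c:ℝ) + d/2) ((d:ℝ)/2) := by
  unfold L
  simp only [Set.mem_setOf_eq, L_eq_mk]

lemma no_diag {p q α z : ℍ[ℝ]} (hα : α ≠ 0) (h : OrigamiInter p q α α z) : False := by
  obtain ⟨⟨r, s, h1, h2⟩, hu⟩ := h
  have k1 : z + α = p + (r + 1) • α := by rw [h1, add_smul, one_smul]; abel
  have k2 : z + α = q + (s + 1) • α := by rw [h2, add_smul, one_smul]; abel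
  have h3 := hu (z + α) ⟨r + 1, s + 1, k1, k2⟩
  apply hα
  have : z + α = z + 0 := by rw [add_zero]; exact h3
  exact add_left_cancel this

lemma inter_of {p q α β z : ℍ[ℝ]} (r s : ℝ) (h1 : z = p + r • α) (h2 : z = q + s • β)
    (ind : ∀ r' s' : ℝ, r' • α = s' • β → r' = 0) : OrigamiInter p q α β z := by
  refine ⟨⟨r, s, h1, h2⟩, ?_⟩
  rintro z' ⟨r', s', k1, k2⟩
  have h5 : z' - z = (r' - r) • α := by rw [k1, h1, sub_smul]; abel
  have h6 : z' - z = (s' - s) • β := by rw [k2, h2, sub_smul]; abel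
  have e4 : (r' - r) • α = (s' - s) • β := by rw [← h5, h6]
  have hr : r' - r = 0 := ind _ _ e4
  have hr' : r' = r := by linarith
  rw [k1, hr']
  exact h1.symm

/- independence lemmas -/
lemma ind_one_qi : ∀ r s : ℝ, r • (1:ℍ[ℝ]) = s • qi → r = 0 := by
  intro r s hrs
  rw [qeq_iff] at hrs
  simp only [one_mk, qi_mk, qsmul, re_mk, imI_mk, imJ_mk, imK_mk] at hrs
  obtain ⟨w1, w2, w3, w4⟩ := hrs; linarith

lemma ind_qi_one : ∀ r s : ℝ, r • qi = s • (1:ℍ[ℝ]) → r = 0 := by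
  intro r s hrs
  rw [qeq_iff] at hrs
  simp only [one_mk, qi_mk, qsmul, re_mk, imI_mk, imJ_mk, imK_mk] at hrs
  obtain ⟨w1, w2, w3, w4⟩ := hrs; linarith

lemma ind_qi_u3 : ∀ r s : ℝ, r • qi = s • u3 → r = 0 := by
  intro r s hrs
  rw [qeq_iff] at hrs
  simp only [qi_mk, u3_mk, qsmul, re_mk, imI_mk, imJ_mk, imK_mk] at hrs
  obtain ⟨w1, w2, w3, w4⟩ := hrs; linarith

lemma ind_one_u3 : ∀ r s : ℝ, r • (1:ℍ[ℝ]) = s • u3 → r = 0 := by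
  intro r s hrs
  rw [qeq_iff] at hrs
  simp only [one_mk, u3_mk, qsmul, re_mk, imI_mk, imJ_mk, imK_mk] at hrs
  obtain ⟨w1, w2, w3, w4⟩ := hrs; linarith

lemma ind_one_qj : ∀ r s : ℝ, r • (1:ℍ[ℝ]) = s • qj → r = 0 := by
  intro r s hrs
  rw [qeq_iff] at hrs
  simp only [one_mk, qj_mk, qsmul, re_mk, imI_mk, imJ_mk, imK_mk] at hrs
  obtain ⟨w1, w2, w3, w4⟩ := hrs; linarith

lemma ind_qj_one : ∀ r s : ℝ, r • qj = s • (1:ℍ[ℝ]) → r = 0 := by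
  intro r s hrs
  rw [qeq_iff] at hrs
  simp only [one_mk, qj_mk, qsmul, re_mk, imI_mk, imJ_mk, imK_mk] at hrs
  obtain ⟨w1, w2, w3, w4⟩ := hrs; linarith

lemma ind_qj_u5 : ∀ r s : ℝ, r • qj = s • u5 → r = 0 := by
  intro r s hrs
  rw [qeq_iff] at hrs
  simp only [qj_mk, u5_mk, qsmul, re_mk, imI_mk, imJ_mk, imK_mk] at hrs
  obtain ⟨w1, w2, w3, w4⟩ := hrs; linarith

lemma ind_one_u5 : ∀ r s : ℝ, r • (1:ℍ[ℝ]) = s • u5 → r = 0 := by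
  intro r s hrs
  rw [qeq_iff] at hrs
  simp only [one_mk, u5_mk, qsmul, re_mk, imI_mk, imJ_mk, imK_mk] at hrs
  obtain ⟨w1, w2, w3, w4⟩ := hrs; linarith

lemma ind_hur_u7 : ∀ r s : ℝ, r • hur = s • u7 → r = 0 := by
  intro r s hrs
  rw [qeq_iff] at hrs
  simp only [hur_mk, u7_mk, qsmul, re_mk, imI_mk, imJ_mk, imK_mk] at hrs
  obtain ⟨w1, w2, w3, w4⟩ := hrs; linarith

lemma ind_one_hur : ∀ r s : ℝ, r • (1:ℍ[ℝ]) = s • hur → r = 0 := by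
  intro r s hrs
  rw [qeq_iff] at hrs
  simp only [one_mk, hur_mk, qsmul, re_mk, imI_mk, imJ_mk, imK_mk] at hrs
  obtain ⟨w1, w2, w3, w4⟩ := hrs; linarith

lemma ind_hur_one : ∀ r s : ℝ, r • hur = s • (1:ℍ[ℝ]) → r = 0 := by
  intro r s hrs
  rw [qeq_iff] at hrs
  simp only [one_mk, hur_mk, qsmul, re_mk, imI_mk, imJ_mk, imK_mk] at hrs
  obtain ⟨w1, w2, w3, w4⟩ := hrs; linarith

/- membership in U14 -/
lemma U14_one : (1 : ℍ[ℝ]) ∈ U14 := by simp [U14]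
lemma U14_qi : qi ∈ U14 := by simp [U14]
lemma U14_u3 : u3 ∈ U14 := by simp [U14]
lemma U14_qj : qj ∈ U14 := by simp [U14]
lemma U14_u5 : u5 ∈ U14 := by simp [U14]
lemma U14_hur : hur ∈ U14 := by simp [U14]
lemma U14_u7 : u7 ∈ U14 := by simp [U14]

set_option maxHeartbeats 4000000 in
/-- The hard inclusion step: intersections of lattice points stay in the lattice. -/
lemma L_step {p q α β z : ℍ[ℝ]} (hp : p ∈ L) (hq : q ∈ L)
    (hα : α ∈ U14) (hβ : β ∈ U14) (h : OrigamiInter p q α β z) : z ∈ L := by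
  obtain ⟨a, b, c, d, rfl⟩ := memL_iff_mk.mp hp
  obtain ⟨a', b', c', d', rfl⟩ := memL_iff_mk.mp hq
  simp only [U14, Set.mem_insert_iff, Set.mem_singleton_iff] at hα hβ
  rcases hα with rfl | rfl | rfl | rfl | rfl | rfl | rfl <;>
    rcases hβ with rfl | rfl | rfl | rfl | rfl | rfl | rfl
  · exact (no_diag one14_ne h).elim
  · obtain ⟨⟨r, s, h1, h2⟩, -⟩ := h
    simp only [one_mk, qi_mk, qj_mk, u3_mk, u5_mk, hur_mk, u7_mk, qsmul, qadd, re_mk, imI_mk, imJ_mk, imK_mk] at h1 h2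
    rw [h1] at h2
    rw [qeq_iff] at h2
    simp only [re_mk, imI_mk, imJ_mk, imK_mk] at h2
    obtain ⟨g1, g2, g3, g4⟩ := h2
    refine memL_iff_mk.mpr ⟨a', b, c, d, ?_⟩
    rw [h1, qeq_iff]
    simp only [re_mk, imI_mk, imJ_mk, imK_mk]
    refine ⟨?_, ?_, ?_, ?_⟩ <;> push_cast <;> linarith
  · obtain ⟨⟨r, s, h1, h2⟩, -⟩ := h
    simp only [one_mk, qi_mk, qj_mk, u3_mk, u5_mk, hur_mk, u7_mk, qsmul, qadd, re_mk, imI_mk, imJ_mk, imK_mk] at h1 h2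
    rw [h1] at h2
    rw [qeq_iff] at h2
    simp only [re_mk, imI_mk, imJ_mk, imK_mk] at h2
    obtain ⟨g1, g2, g3, g4⟩ := h2
    refine memL_iff_mk.mpr ⟨a' - b + b', b, c, d, ?_⟩
    rw [h1, qeq_iff]
    simp only [re_mk, imI_mk, imJ_mk, imK_mk]
    refine ⟨?_, ?_, ?_, ?_⟩ <;> push_cast <;> linarith
  · obtain ⟨⟨r, s, h1, h2⟩, -⟩ := h
    simp only [one_mk, qi_mk, qj_mk, u3_mk, u5_mk, hur_mk, u7_mk, qsmul, qadd, re_mk, imI_mk, imJ_mk, imK_mk] at h1 h2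
    rw [h1] at h2
    rw [qeq_iff] at h2
    simp only [re_mk, imI_mk, imJ_mk, imK_mk] at h2
    obtain ⟨g1, g2, g3, g4⟩ := h2
    refine memL_iff_mk.mpr ⟨a', b, c, d, ?_⟩
    rw [h1, qeq_iff]
    simp only [re_mk, imI_mk, imJ_mk, imK_mk]
    refine ⟨?_, ?_, ?_, ?_⟩ <;> push_cast <;> linarith
  · obtain ⟨⟨r, s, h1, h2⟩, -⟩ := h
    simp only [one_mk, qi_mk, qj_mk, u3_mk, u5_mk, hur_mk, u7_mk, qsmul, qadd, re_mk, imI_mk, imJ_mk, imK_mk] at h1 h2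
    rw [h1] at h2
    rw [qeq_iff] at h2
    simp only [re_mk, imI_mk, imJ_mk, imK_mk] at h2
    obtain ⟨g1, g2, g3, g4⟩ := h2
    refine memL_iff_mk.mpr ⟨a' - c + c', b, c, d, ?_⟩
    rw [h1, qeq_iff]
    simp only [re_mk, imI_mk, imJ_mk, imK_mk]
    refine ⟨?_, ?_, ?_, ?_⟩ <;> push_cast <;> linarith
  · obtain ⟨⟨r, s, h1, h2⟩, -⟩ := h
    simp only [one_mk, qi_mk, qj_mk, u3_mk, u5_mk, hur_mk, u7_mk, qsmul, qadd, re_mk, imI_mk, imJ_mk, imK_mk] at h1 h2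
    rw [h1] at h2
    rw [qeq_iff] at h2
    simp only [re_mk, imI_mk, imJ_mk, imK_mk] at h2
    obtain ⟨g1, g2, g3, g4⟩ := h2
    refine memL_iff_mk.mpr ⟨a', b, c, d, ?_⟩
    rw [h1, qeq_iff]
    simp only [re_mk, imI_mk, imJ_mk, imK_mk]
    refine ⟨?_, ?_, ?_, ?_⟩ <;> push_cast <;> linarith
  · obtain ⟨⟨r, s, h1, h2⟩, -⟩ := h
    simp only [one_mk, qi_mk, qj_mk, u3_mk, u5_mk, hur_mk, u7_mk, qsmul, qadd, re_mk, imI_mk, imJ_mk, imK_mk] at h1 h2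
    rw [h1] at h2
    rw [qeq_iff] at h2
    simp only [re_mk, imI_mk, imJ_mk, imK_mk] at h2
    obtain ⟨g1, g2, g3, g4⟩ := h2
    refine memL_iff_mk.mpr ⟨a' + d' - d, b, c, d, ?_⟩
    rw [h1, qeq_iff]
    simp only [re_mk, imI_mk, imJ_mk, imK_mk]
    refine ⟨?_, ?_, ?_, ?_⟩ <;> push_cast <;> linarith
  · obtain ⟨⟨r, s, h1, h2⟩, -⟩ := h
    simp only [one_mk, qi_mk, qj_mk, u3_mk, u5_mk, hur_mk, u7_mk, qsmul, qadd, re_mk, imI_mk, imJ_mk, imK_mk] at h1 h2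
    rw [h1] at h2
    rw [qeq_iff] at h2
    simp only [re_mk, imI_mk, imJ_mk, imK_mk] at h2
    obtain ⟨g1, g2, g3, g4⟩ := h2
    refine memL_iff_mk.mpr ⟨a, b', c, d, ?_⟩
    rw [h1, qeq_iff]
    simp only [re_mk, imI_mk, imJ_mk, imK_mk]
    refine ⟨?_, ?_, ?_, ?_⟩ <;> push_cast <;> linarith
  · exact (no_diag qi_ne h).elim
  · obtain ⟨⟨r, s, h1, h2⟩, -⟩ := h
    simp only [one_mk, qi_mk, qj_mk, u3_mk, u5_mk, hur_mk, u7_mk, qsmul, qadd, re_mk, imI_mk, imJ_mk, imK_mk] at h1 h2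
    rw [h1] at h2
    rw [qeq_iff] at h2
    simp only [re_mk, imI_mk, imJ_mk, imK_mk] at h2
    obtain ⟨g1, g2, g3, g4⟩ := h2
    refine memL_iff_mk.mpr ⟨a, a' - a + b', c, d, ?_⟩
    rw [h1, qeq_iff]
    simp only [re_mk, imI_mk, imJ_mk, imK_mk]
    refine ⟨?_, ?_, ?_, ?_⟩ <;> push_cast <;> linarith
  · obtain ⟨⟨r, s, h1, h2⟩, -⟩ := h
    simp only [one_mk, qi_mk, qj_mk, u3_mk, u5_mk, hur_mk, u7_mk, qsmul, qadd, re_mk, imI_mk, imJ_mk, imK_mk] at h1 h2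
    rw [h1] at h2
    rw [qeq_iff] at h2
    simp only [re_mk, imI_mk, imJ_mk, imK_mk] at h2
    obtain ⟨g1, g2, g3, g4⟩ := h2
    refine memL_iff_mk.mpr ⟨a, b', c, d, ?_⟩
    rw [h1, qeq_iff]
    simp only [re_mk, imI_mk, imJ_mk, imK_mk]
    refine ⟨?_, ?_, ?_, ?_⟩ <;> push_cast <;> linarith
  · obtain ⟨⟨r, s, h1, h2⟩, -⟩ := h
    simp only [one_mk, qi_mk, qj_mk, u3_mk, u5_mk, hur_mk, u7_mk, qsmul, qadd, re_mk, imI_mk, imJ_mk, imK_mk] at h1 h2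
    rw [h1] at h2
    rw [qeq_iff] at h2
    simp only [re_mk, imI_mk, imJ_mk, imK_mk] at h2
    obtain ⟨g1, g2, g3, g4⟩ := h2
    refine memL_iff_mk.mpr ⟨a, b', c, d, ?_⟩
    rw [h1, qeq_iff]
    simp only [re_mk, imI_mk, imJ_mk, imK_mk]
    refine ⟨?_, ?_, ?_, ?_⟩ <;> push_cast <;> linarith
  · obtain ⟨⟨r, s, h1, h2⟩, -⟩ := h
    simp only [one_mk, qi_mk, qj_mk, u3_mk, u5_mk, hur_mk, u7_mk, qsmul, qadd, re_mk, imI_mk, imJ_mk, imK_mk] at h1 h2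
    rw [h1] at h2
    rw [qeq_iff] at h2
    simp only [re_mk, imI_mk, imJ_mk, imK_mk] at h2
    obtain ⟨g1, g2, g3, g4⟩ := h2
    refine memL_iff_mk.mpr ⟨a, b', c, d, ?_⟩
    rw [h1, qeq_iff]
    simp only [re_mk, imI_mk, imJ_mk, imK_mk]
    refine ⟨?_, ?_, ?_, ?_⟩ <;> push_cast <;> linarith
  · obtain ⟨⟨r, s, h1, h2⟩, -⟩ := h
    simp only [one_mk, qi_mk, qj_mk, u3_mk, u5_mk, hur_mk, u7_mk, qsmul, qadd, re_mk, imI_mk, imJ_mk, imK_mk] at h1 h2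
    rw [h1] at h2
    rw [qeq_iff] at h2
    simp only [re_mk, imI_mk, imJ_mk, imK_mk] at h2
    obtain ⟨g1, g2, g3, g4⟩ := h2
    refine memL_iff_mk.mpr ⟨a, b', c, d, ?_⟩
    rw [h1, qeq_iff]
    simp only [re_mk, imI_mk, imJ_mk, imK_mk]
    refine ⟨?_, ?_, ?_, ?_⟩ <;> push_cast <;> linarith
  · obtain ⟨⟨r, s, h1, h2⟩, -⟩ := h
    simp only [one_mk, qi_mk, qj_mk, u3_mk, u5_mk, hur_mk, u7_mk, qsmul, qadd, re_mk, imI_mk, imJ_mk, imK_mk] at h1 h2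
    rw [h1] at h2
    rw [qeq_iff] at h2
    simp only [re_mk, imI_mk, imJ_mk, imK_mk] at h2
    obtain ⟨g1, g2, g3, g4⟩ := h2
    refine memL_iff_mk.mpr ⟨a + b - b', b', c, d, ?_⟩
    rw [h1, qeq_iff]
    simp only [re_mk, imI_mk, imJ_mk, imK_mk]
    refine ⟨?_, ?_, ?_, ?_⟩ <;> push_cast <;> linarith
  · obtain ⟨⟨r, s, h1, h2⟩, -⟩ := h
    simp only [one_mk, qi_mk, qj_mk, u3_mk, u5_mk, hur_mk, u7_mk, qsmul, qadd, re_mk, imI_mk, imJ_mk, imK_mk] at h1 h2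
    rw [h1] at h2
    rw [qeq_iff] at h2
    simp only [re_mk, imI_mk, imJ_mk, imK_mk] at h2
    obtain ⟨g1, g2, g3, g4⟩ := h2
    refine memL_iff_mk.mpr ⟨a', a - a' + b, c, d, ?_⟩
    rw [h1, qeq_iff]
    simp only [re_mk, imI_mk, imJ_mk, imK_mk]
    refine ⟨?_, ?_, ?_, ?_⟩ <;> push_cast <;> linarith
  · exact (no_diag u3_ne h).elim
  · obtain ⟨⟨r, s, h1, h2⟩, -⟩ := h
    simp only [one_mk, qi_mk, qj_mk, u3_mk, u5_mk, hur_mk, u7_mk, qsmul, qadd, re_mk, imI_mk, imJ_mk, imK_mk] at h1 h2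
    rw [h1] at h2
    rw [qeq_iff] at h2
    simp only [re_mk, imI_mk, imJ_mk, imK_mk] at h2
    obtain ⟨g1, g2, g3, g4⟩ := h2
    refine memL_iff_mk.mpr ⟨a', a - a' + b, c, d, ?_⟩
    rw [h1, qeq_iff]
    simp only [re_mk, imI_mk, imJ_mk, imK_mk]
    refine ⟨?_, ?_, ?_, ?_⟩ <;> push_cast <;> linarith
  · obtain ⟨⟨r, s, h1, h2⟩, -⟩ := h
    simp only [one_mk, qi_mk, qj_mk, u3_mk, u5_mk, hur_mk, u7_mk, qsmul, qadd, re_mk, imI_mk, imJ_mk, imK_mk] at h1 h2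
    rw [h1] at h2
    rw [qeq_iff] at h2
    simp only [re_mk, imI_mk, imJ_mk, imK_mk] at h2
    obtain ⟨g1, g2, g3, g4⟩ := h2
    refine memL_iff_mk.mpr ⟨a' - c + c', a - a' + b + c - c', c, d, ?_⟩
    rw [h1, qeq_iff]
    simp only [re_mk, imI_mk, imJ_mk, imK_mk]
    refine ⟨?_, ?_, ?_, ?_⟩ <;> push_cast <;> linarith
  · obtain ⟨⟨r, s, h1, h2⟩, -⟩ := h
    simp only [one_mk, qi_mk, qj_mk, u3_mk, u5_mk, hur_mk, u7_mk, qsmul, qadd, re_mk, imI_mk, imJ_mk, imK_mk] at h1 h2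
    rw [h1] at h2
    rw [qeq_iff] at h2
    simp only [re_mk, imI_mk, imJ_mk, imK_mk] at h2
    obtain ⟨g1, g2, g3, g4⟩ := h2
    refine memL_iff_mk.mpr ⟨a + b - b', b', c, d, ?_⟩
    rw [h1, qeq_iff]
    simp only [re_mk, imI_mk, imJ_mk, imK_mk]
    refine ⟨?_, ?_, ?_, ?_⟩ <;> push_cast <;> linarith
  · obtain ⟨⟨r, s, h1, h2⟩, -⟩ := h
    simp only [one_mk, qi_mk, qj_mk, u3_mk, u5_mk, hur_mk, u7_mk, qsmul, qadd, re_mk, imI_mk, imJ_mk, imK_mk] at h1 h2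
    rw [h1] at h2
    rw [qeq_iff] at h2
    simp only [re_mk, imI_mk, imJ_mk, imK_mk] at h2
    obtain ⟨g1, g2, g3, g4⟩ := h2
    refine memL_iff_mk.mpr ⟨a + b - b', b', c, d, ?_⟩
    rw [h1, qeq_iff]
    simp only [re_mk, imI_mk, imJ_mk, imK_mk]
    refine ⟨?_, ?_, ?_, ?_⟩ <;> push_cast <;> linarith
  · obtain ⟨⟨r, s, h1, h2⟩, -⟩ := h
    simp only [one_mk, qi_mk, qj_mk, u3_mk, u5_mk, hur_mk, u7_mk, qsmul, qadd, re_mk, imI_mk, imJ_mk, imK_mk] at h1 h2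
    rw [h1] at h2
    rw [qeq_iff] at h2
    simp only [re_mk, imI_mk, imJ_mk, imK_mk] at h2
    obtain ⟨g1, g2, g3, g4⟩ := h2
    refine memL_iff_mk.mpr ⟨a, b, c', d, ?_⟩
    rw [h1, qeq_iff]
    simp only [re_mk, imI_mk, imJ_mk, imK_mk]
    refine ⟨?_, ?_, ?_, ?_⟩ <;> push_cast <;> linarith
  · obtain ⟨⟨r, s, h1, h2⟩, -⟩ := h
    simp only [one_mk, qi_mk, qj_mk, u3_mk, u5_mk, hur_mk, u7_mk, qsmul, qadd, re_mk, imI_mk, imJ_mk, imK_mk] at h1 h2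
    rw [h1] at h2
    rw [qeq_iff] at h2
    simp only [re_mk, imI_mk, imJ_mk, imK_mk] at h2
    obtain ⟨g1, g2, g3, g4⟩ := h2
    refine memL_iff_mk.mpr ⟨a, b, c', d, ?_⟩
    rw [h1, qeq_iff]
    simp only [re_mk, imI_mk, imJ_mk, imK_mk]
    refine ⟨?_, ?_, ?_, ?_⟩ <;> push_cast <;> linarith
  · obtain ⟨⟨r, s, h1, h2⟩, -⟩ := h
    simp only [one_mk, qi_mk, qj_mk, u3_mk, u5_mk, hur_mk, u7_mk, qsmul, qadd, re_mk, imI_mk, imJ_mk, imK_mk] at h1 h2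
    rw [h1] at h2
    rw [qeq_iff] at h2
    simp only [re_mk, imI_mk, imJ_mk, imK_mk] at h2
    obtain ⟨g1, g2, g3, g4⟩ := h2
    refine memL_iff_mk.mpr ⟨a, b, c', d, ?_⟩
    rw [h1, qeq_iff]
    simp only [re_mk, imI_mk, imJ_mk, imK_mk]
    refine ⟨?_, ?_, ?_, ?_⟩ <;> push_cast <;> linarith
  · exact (no_diag qj_ne h).elim
  · obtain ⟨⟨r, s, h1, h2⟩, -⟩ := h
    simp only [one_mk, qi_mk, qj_mk, u3_mk, u5_mk, hur_mk, u7_mk, qsmul, qadd, re_mk, imI_mk, imJ_mk, imK_mk] at h1 h2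
    rw [h1] at h2
    rw [qeq_iff] at h2
    simp only [re_mk, imI_mk, imJ_mk, imK_mk] at h2
    obtain ⟨g1, g2, g3, g4⟩ := h2
    refine memL_iff_mk.mpr ⟨a, b, a' - a + c', d, ?_⟩
    rw [h1, qeq_iff]
    simp only [re_mk, imI_mk, imJ_mk, imK_mk]
    refine ⟨?_, ?_, ?_, ?_⟩ <;> push_cast <;> linarith
  · obtain ⟨⟨r, s, h1, h2⟩, -⟩ := h
    simp only [one_mk, qi_mk, qj_mk, u3_mk, u5_mk, hur_mk, u7_mk, qsmul, qadd, re_mk, imI_mk, imJ_mk, imK_mk] at h1 h2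
    rw [h1] at h2
    rw [qeq_iff] at h2
    simp only [re_mk, imI_mk, imJ_mk, imK_mk] at h2
    obtain ⟨g1, g2, g3, g4⟩ := h2
    refine memL_iff_mk.mpr ⟨a, b, c', d, ?_⟩
    rw [h1, qeq_iff]
    simp only [re_mk, imI_mk, imJ_mk, imK_mk]
    refine ⟨?_, ?_, ?_, ?_⟩ <;> push_cast <;> linarith
  · obtain ⟨⟨r, s, h1, h2⟩, -⟩ := h
    simp only [one_mk, qi_mk, qj_mk, u3_mk, u5_mk, hur_mk, u7_mk, qsmul, qadd, re_mk, imI_mk, imJ_mk, imK_mk] at h1 h2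
    rw [h1] at h2
    rw [qeq_iff] at h2
    simp only [re_mk, imI_mk, imJ_mk, imK_mk] at h2
    obtain ⟨g1, g2, g3, g4⟩ := h2
    refine memL_iff_mk.mpr ⟨a, b, c', d, ?_⟩
    rw [h1, qeq_iff]
    simp only [re_mk, imI_mk, imJ_mk, imK_mk]
    refine ⟨?_, ?_, ?_, ?_⟩ <;> push_cast <;> linarith
  · obtain ⟨⟨r, s, h1, h2⟩, -⟩ := h
    simp only [one_mk, qi_mk, qj_mk, u3_mk, u5_mk, hur_mk, u7_mk, qsmul, qadd, re_mk, imI_mk, imJ_mk, imK_mk] at h1 h2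
    rw [h1] at h2
    rw [qeq_iff] at h2
    simp only [re_mk, imI_mk, imJ_mk, imK_mk] at h2
    obtain ⟨g1, g2, g3, g4⟩ := h2
    refine memL_iff_mk.mpr ⟨a + c - c', b, c', d, ?_⟩
    rw [h1, qeq_iff]
    simp only [re_mk, imI_mk, imJ_mk, imK_mk]
    refine ⟨?_, ?_, ?_, ?_⟩ <;> push_cast <;> linarith
  · obtain ⟨⟨r, s, h1, h2⟩, -⟩ := h
    simp only [one_mk, qi_mk, qj_mk, u3_mk, u5_mk, hur_mk, u7_mk, qsmul, qadd, re_mk, imI_mk, imJ_mk, imK_mk] at h1 h2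
    rw [h1] at h2
    rw [qeq_iff] at h2
    simp only [re_mk, imI_mk, imJ_mk, imK_mk] at h2
    obtain ⟨g1, g2, g3, g4⟩ := h2
    refine memL_iff_mk.mpr ⟨a', b, a - a' + c, d, ?_⟩
    rw [h1, qeq_iff]
    simp only [re_mk, imI_mk, imJ_mk, imK_mk]
    refine ⟨?_, ?_, ?_, ?_⟩ <;> push_cast <;> linarith
  · obtain ⟨⟨r, s, h1, h2⟩, -⟩ := h
    simp only [one_mk, qi_mk, qj_mk, u3_mk, u5_mk, hur_mk, u7_mk, qsmul, qadd, re_mk, imI_mk, imJ_mk, imK_mk] at h1 h2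
    rw [h1] at h2
    rw [qeq_iff] at h2
    simp only [re_mk, imI_mk, imJ_mk, imK_mk] at h2
    obtain ⟨g1, g2, g3, g4⟩ := h2
    refine memL_iff_mk.mpr ⟨a + c - c', b, c', d, ?_⟩
    rw [h1, qeq_iff]
    simp only [re_mk, imI_mk, imJ_mk, imK_mk]
    refine ⟨?_, ?_, ?_, ?_⟩ <;> push_cast <;> linarith
  · obtain ⟨⟨r, s, h1, h2⟩, -⟩ := h
    simp only [one_mk, qi_mk, qj_mk, u3_mk, u5_mk, hur_mk, u7_mk, qsmul, qadd, re_mk, imI_mk, imJ_mk, imK_mk] at h1 h2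
    rw [h1] at h2
    rw [qeq_iff] at h2
    simp only [re_mk, imI_mk, imJ_mk, imK_mk] at h2
    obtain ⟨g1, g2, g3, g4⟩ := h2
    refine memL_iff_mk.mpr ⟨a', b, a - a' + c, d, ?_⟩
    rw [h1, qeq_iff]
    simp only [re_mk, imI_mk, imJ_mk, imK_mk]
    refine ⟨?_, ?_, ?_, ?_⟩ <;> push_cast <;> linarith
  · exact (no_diag u5_ne h).elim
  · obtain ⟨⟨r, s, h1, h2⟩, -⟩ := h
    simp only [one_mk, qi_mk, qj_mk, u3_mk, u5_mk, hur_mk, u7_mk, qsmul, qadd, re_mk, imI_mk, imJ_mk, imK_mk] at h1 h2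
    rw [h1] at h2
    rw [qeq_iff] at h2
    simp only [re_mk, imI_mk, imJ_mk, imK_mk] at h2
    obtain ⟨g1, g2, g3, g4⟩ := h2
    refine memL_iff_mk.mpr ⟨a + c - c', b, c', d, ?_⟩
    rw [h1, qeq_iff]
    simp only [re_mk, imI_mk, imJ_mk, imK_mk]
    refine ⟨?_, ?_, ?_, ?_⟩ <;> push_cast <;> linarith
  · obtain ⟨⟨r, s, h1, h2⟩, -⟩ := h
    simp only [one_mk, qi_mk, qj_mk, u3_mk, u5_mk, hur_mk, u7_mk, qsmul, qadd, re_mk, imI_mk, imJ_mk, imK_mk] at h1 h2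
    rw [h1] at h2
    rw [qeq_iff] at h2
    simp only [re_mk, imI_mk, imJ_mk, imK_mk] at h2
    obtain ⟨g1, g2, g3, g4⟩ := h2
    refine memL_iff_mk.mpr ⟨a + c - c', b, c', d, ?_⟩
    rw [h1, qeq_iff]
    simp only [re_mk, imI_mk, imJ_mk, imK_mk]
    refine ⟨?_, ?_, ?_, ?_⟩ <;> push_cast <;> linarith
  · obtain ⟨⟨r, s, h1, h2⟩, -⟩ := h
    simp only [one_mk, qi_mk, qj_mk, u3_mk, u5_mk, hur_mk, u7_mk, qsmul, qadd, re_mk, imI_mk, imJ_mk, imK_mk] at h1 h2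
    rw [h1] at h2
    rw [qeq_iff] at h2
    simp only [re_mk, imI_mk, imJ_mk, imK_mk] at h2
    obtain ⟨g1, g2, g3, g4⟩ := h2
    refine memL_iff_mk.mpr ⟨a, b, c, d', ?_⟩
    rw [h1, qeq_iff]
    simp only [re_mk, imI_mk, imJ_mk, imK_mk]
    refine ⟨?_, ?_, ?_, ?_⟩ <;> push_cast <;> linarith
  · obtain ⟨⟨r, s, h1, h2⟩, -⟩ := h
    simp only [one_mk, qi_mk, qj_mk, u3_mk, u5_mk, hur_mk, u7_mk, qsmul, qadd, re_mk, imI_mk, imJ_mk, imK_mk] at h1 h2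
    rw [h1] at h2
    rw [qeq_iff] at h2
    simp only [re_mk, imI_mk, imJ_mk, imK_mk] at h2
    obtain ⟨g1, g2, g3, g4⟩ := h2
    refine memL_iff_mk.mpr ⟨a, b, c, d', ?_⟩
    rw [h1, qeq_iff]
    simp only [re_mk, imI_mk, imJ_mk, imK_mk]
    refine ⟨?_, ?_, ?_, ?_⟩ <;> push_cast <;> linarith
  · obtain ⟨⟨r, s, h1, h2⟩, -⟩ := h
    simp only [one_mk, qi_mk, qj_mk, u3_mk, u5_mk, hur_mk, u7_mk, qsmul, qadd, re_mk, imI_mk, imJ_mk, imK_mk] at h1 h2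
    rw [h1] at h2
    rw [qeq_iff] at h2
    simp only [re_mk, imI_mk, imJ_mk, imK_mk] at h2
    obtain ⟨g1, g2, g3, g4⟩ := h2
    refine memL_iff_mk.mpr ⟨a, b, c, d', ?_⟩
    rw [h1, qeq_iff]
    simp only [re_mk, imI_mk, imJ_mk, imK_mk]
    refine ⟨?_, ?_, ?_, ?_⟩ <;> push_cast <;> linarith
  · obtain ⟨⟨r, s, h1, h2⟩, -⟩ := h
    simp only [one_mk, qi_mk, qj_mk, u3_mk, u5_mk, hur_mk, u7_mk, qsmul, qadd, re_mk, imI_mk, imJ_mk, imK_mk] at h1 h2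
    rw [h1] at h2
    rw [qeq_iff] at h2
    simp only [re_mk, imI_mk, imJ_mk, imK_mk] at h2
    obtain ⟨g1, g2, g3, g4⟩ := h2
    refine memL_iff_mk.mpr ⟨a, b, c, d', ?_⟩
    rw [h1, qeq_iff]
    simp only [re_mk, imI_mk, imJ_mk, imK_mk]
    refine ⟨?_, ?_, ?_, ?_⟩ <;> push_cast <;> linarith
  · obtain ⟨⟨r, s, h1, h2⟩, -⟩ := h
    simp only [one_mk, qi_mk, qj_mk, u3_mk, u5_mk, hur_mk, u7_mk, qsmul, qadd, re_mk, imI_mk, imJ_mk, imK_mk] at h1 h2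
    rw [h1] at h2
    rw [qeq_iff] at h2
    simp only [re_mk, imI_mk, imJ_mk, imK_mk] at h2
    obtain ⟨g1, g2, g3, g4⟩ := h2
    refine memL_iff_mk.mpr ⟨a, b, c, d', ?_⟩
    rw [h1, qeq_iff]
    simp only [re_mk, imI_mk, imJ_mk, imK_mk]
    refine ⟨?_, ?_, ?_, ?_⟩ <;> push_cast <;> linarith
  · exact (no_diag hur_ne h).elim
  · obtain ⟨⟨r, s, h1, h2⟩, -⟩ := h
    simp only [one_mk, qi_mk, qj_mk, u3_mk, u5_mk, hur_mk, u7_mk, qsmul, qadd, re_mk, imI_mk, imJ_mk, imK_mk] at h1 h2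
    rw [h1] at h2
    rw [qeq_iff] at h2
    simp only [re_mk, imI_mk, imJ_mk, imK_mk] at h2
    obtain ⟨g1, g2, g3, g4⟩ := h2
    refine memL_iff_mk.mpr ⟨a, b, c, a' - a + d', ?_⟩
    rw [h1, qeq_iff]
    simp only [re_mk, imI_mk, imJ_mk, imK_mk]
    refine ⟨?_, ?_, ?_, ?_⟩ <;> push_cast <;> linarith
  · obtain ⟨⟨r, s, h1, h2⟩, -⟩ := h
    simp only [one_mk, qi_mk, qj_mk, u3_mk, u5_mk, hur_mk, u7_mk, qsmul, qadd, re_mk, imI_mk, imJ_mk, imK_mk] at h1 h2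
    rw [h1] at h2
    rw [qeq_iff] at h2
    simp only [re_mk, imI_mk, imJ_mk, imK_mk] at h2
    obtain ⟨g1, g2, g3, g4⟩ := h2
    refine memL_iff_mk.mpr ⟨a + d - d', b, c, d', ?_⟩
    rw [h1, qeq_iff]
    simp only [re_mk, imI_mk, imJ_mk, imK_mk]
    refine ⟨?_, ?_, ?_, ?_⟩ <;> push_cast <;> linarith
  · obtain ⟨⟨r, s, h1, h2⟩, -⟩ := h
    simp only [one_mk, qi_mk, qj_mk, u3_mk, u5_mk, hur_mk, u7_mk, qsmul, qadd, re_mk, imI_mk, imJ_mk, imK_mk] at h1 h2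
    rw [h1] at h2
    rw [qeq_iff] at h2
    simp only [re_mk, imI_mk, imJ_mk, imK_mk] at h2
    obtain ⟨g1, g2, g3, g4⟩ := h2
    refine memL_iff_mk.mpr ⟨a + d - d', b, c, d', ?_⟩
    rw [h1, qeq_iff]
    simp only [re_mk, imI_mk, imJ_mk, imK_mk]
    refine ⟨?_, ?_, ?_, ?_⟩ <;> push_cast <;> linarith
  · obtain ⟨⟨r, s, h1, h2⟩, -⟩ := h
    simp only [one_mk, qi_mk, qj_mk, u3_mk, u5_mk, hur_mk, u7_mk, qsmul, qadd, re_mk, imI_mk, imJ_mk, imK_mk] at h1 h2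
    rw [h1] at h2
    rw [qeq_iff] at h2
    simp only [re_mk, imI_mk, imJ_mk, imK_mk] at h2
    obtain ⟨g1, g2, g3, g4⟩ := h2
    refine memL_iff_mk.mpr ⟨a + d - d', b, c, d', ?_⟩
    rw [h1, qeq_iff]
    simp only [re_mk, imI_mk, imJ_mk, imK_mk]
    refine ⟨?_, ?_, ?_, ?_⟩ <;> push_cast <;> linarith
  · obtain ⟨⟨r, s, h1, h2⟩, -⟩ := h
    simp only [one_mk, qi_mk, qj_mk, u3_mk, u5_mk, hur_mk, u7_mk, qsmul, qadd, re_mk, imI_mk, imJ_mk, imK_mk] at h1 h2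
    rw [h1] at h2
    rw [qeq_iff] at h2
    simp only [re_mk, imI_mk, imJ_mk, imK_mk] at h2
    obtain ⟨g1, g2, g3, g4⟩ := h2
    refine memL_iff_mk.mpr ⟨a + d - d', b, c, d', ?_⟩
    rw [h1, qeq_iff]
    simp only [re_mk, imI_mk, imJ_mk, imK_mk]
    refine ⟨?_, ?_, ?_, ?_⟩ <;> push_cast <;> linarith
  · obtain ⟨⟨r, s, h1, h2⟩, -⟩ := h
    simp only [one_mk, qi_mk, qj_mk, u3_mk, u5_mk, hur_mk, u7_mk, qsmul, qadd, re_mk, imI_mk, imJ_mk, imK_mk] at h1 h2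
    rw [h1] at h2
    rw [qeq_iff] at h2
    simp only [re_mk, imI_mk, imJ_mk, imK_mk] at h2
    obtain ⟨g1, g2, g3, g4⟩ := h2
    refine memL_iff_mk.mpr ⟨a + d - d', b, c, d', ?_⟩
    rw [h1, qeq_iff]
    simp only [re_mk, imI_mk, imJ_mk, imK_mk]
    refine ⟨?_, ?_, ?_, ?_⟩ <;> push_cast <;> linarith
  · obtain ⟨⟨r, s, h1, h2⟩, -⟩ := h
    simp only [one_mk, qi_mk, qj_mk, u3_mk, u5_mk, hur_mk, u7_mk, qsmul, qadd, re_mk, imI_mk, imJ_mk, imK_mk] at h1 h2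
    rw [h1] at h2
    rw [qeq_iff] at h2
    simp only [re_mk, imI_mk, imJ_mk, imK_mk] at h2
    obtain ⟨g1, g2, g3, g4⟩ := h2
    refine memL_iff_mk.mpr ⟨a', b, c, a - a' + d, ?_⟩
    rw [h1, qeq_iff]
    simp only [re_mk, imI_mk, imJ_mk, imK_mk]
    refine ⟨?_, ?_, ?_, ?_⟩ <;> push_cast <;> linarith
  · exact (no_diag u7_ne h).elim


/- ### The reverse inclusion: constructing the lattice -/

def M14 : Set ℍ[ℝ] := MU U14 1

lemma Mseq_succ_mem {k : ℕ} {p q α β z : ℍ[ℝ]} (hp : p ∈ Mseq U14 1 k) (hq : q ∈ Mseq U14 1 k)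
    (hα : α ∈ U14) (hβ : β ∈ U14) (h : OrigamiInter p q α β z) : z ∈ Mseq U14 1 (k+1) :=
  ⟨p, hp, q, hq, α, hα, β, hβ, h⟩

lemma self_inter (p : ℍ[ℝ]) : OrigamiInter p p 1 qi p :=
  inter_of 0 0 (by simp) (by simp) ind_one_qi

lemma Mseq_mono (k : ℕ) : Mseq U14 1 k ⊆ Mseq U14 1 (k+1) :=
  fun p hp => Mseq_succ_mem hp hp U14_one U14_qi (self_inter p)

lemma Mseq_le {k m : ℕ} (h : k ≤ m) : Mseq U14 1 k ⊆ Mseq U14 1 m := by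
  induction m with
  | zero => rw [Nat.le_zero] at h; subst h; exact fun _ hz => hz
  | succ m ih =>
    rcases Nat.lt_or_ge k (m+1) with hlt | hge
    · exact fun z hz => Mseq_mono m (ih (Nat.lt_succ_iff.mp hlt) hz)
    · have : k = m + 1 := le_antisymm h hge
      subst this; exact fun _ hz => hz

lemma MU_step {p q α β z : ℍ[ℝ]} (hp : p ∈ M14) (hq : q ∈ M14)
    (hα : α ∈ U14) (hβ : β ∈ U14) (h : OrigamiInter p q α β z) : z ∈ M14 := by
  obtain ⟨kp, hkp⟩ := Set.mem_iUnion.mp hp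
  obtain ⟨kq, hkq⟩ := Set.mem_iUnion.mp hq
  exact Set.mem_iUnion.mpr ⟨max kp kq + 1,
    Mseq_succ_mem (Mseq_le (le_max_left _ _) hkp) (Mseq_le (le_max_right _ _) hkq) hα hβ h⟩

lemma zero_mem : (0 : ℍ[ℝ]) ∈ M14 := Set.mem_iUnion.mpr ⟨0, Or.inl rfl⟩
lemma one_mem : (1 : ℍ[ℝ]) ∈ M14 := Set.mem_iUnion.mpr ⟨0, Or.inr rfl⟩

lemma translate_inter {p q α β z : ℍ[ℝ]} (h : OrigamiInter p q α β z) (v : ℍ[ℝ]) :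
    OrigamiInter (p + v) (q + v) α β (z + v) := by
  obtain ⟨⟨r, s, h1, h2⟩, hu⟩ := h
  refine ⟨⟨r, s, by rw [h1]; abel, by rw [h2]; abel⟩, ?_⟩
  rintro z' ⟨r', s', k1, k2⟩
  have h3 := hu (z' - v) ⟨r', s', by rw [k1]; abel, by rw [k2]; abel⟩
  have : z' - v + v = z + v := by rw [h3]
  rwa [sub_add_cancel] at this

lemma MU_translate {v : ℍ[ℝ]} (hv : v ∈ M14) (h1v : 1 + v ∈ M14) :
    ∀ z ∈ M14, z + v ∈ M14 := by
  have key : ∀ k, ∀ z ∈ Mseq U14 1 k, z + v ∈ M14 := by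
    intro k
    induction k with
    | zero =>
      intro z hz
      rcases hz with rfl | rfl
      · simpa using hv
      · exact h1v
    | succ k ih =>
      rintro z ⟨p, hp, q, hq, α, hα, β, hβ, hz⟩
      exact MU_step (ih p hp) (ih q hq) hα hβ (translate_inter hz v)
  intro z hz
  obtain ⟨k, hk⟩ := Set.mem_iUnion.mp hz
  exact key k z hk

lemma MU_zsmul {v : ℍ[ℝ]} (h1 : ∀ x ∈ M14, x + v ∈ M14) (h2 : ∀ x ∈ M14, x - v ∈ M14)
    (n : ℤ) : ∀ x ∈ M14, x + (n : ℝ) • v ∈ M14 := by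
  induction n using Int.induction_on with
  | zero => intro x hx; simpa using hx
  | succ n ih =>
    intro x hx
    have h3 := h1 _ (ih x hx)
    have e : x + (((n : ℤ) + 1 : ℤ) : ℝ) • v = x + ((n : ℤ) : ℝ) • v + v := by
      push_cast
      rw [add_smul, one_smul]
      abel
    rw [e]
    exact h3
  | pred n ih =>
    intro x hx
    have h3 := h2 _ (ih x hx)
    have e : x + ((-(n : ℤ) - 1 : ℤ) : ℝ) • v = x + ((-(n : ℤ) : ℤ) : ℝ) • v - v := by
      push_cast
      rw [sub_smul, one_smul]
      abel
    rw [e]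
    exact h3

lemma MU_translate_neg {v : ℍ[ℝ]} (hv : -v ∈ M14) (h1v : 1 - v ∈ M14) :
    ∀ x ∈ M14, x - v ∈ M14 := by
  have h' : (1 : ℍ[ℝ]) + -v ∈ M14 := by rwa [← sub_eq_add_neg]
  intro x hx
  have h3 := MU_translate hv h' x hx
  rwa [← sub_eq_add_neg] at h3

lemma s2inv : Real.sqrt 2 * (Real.sqrt 2)⁻¹ = 1 :=
  mul_inv_cancel₀ (by positivity)

lemma Mseq_succ (k : ℕ) : Mseq U14 1 (k+1) = {z | ∃ p ∈ Mseq U14 1 k, ∃ q ∈ Mseq U14 1 k,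
    ∃ α ∈ U14, ∃ β ∈ U14, OrigamiInter p q α β z} := rfl

lemma Mseq_zero : Mseq U14 1 0 = {0, 1} := rfl

/- explicit constructions -/
lemma mqi : qi ∈ M14 := MU_step zero_mem one_mem U14_qi U14_u3 (inter_of 1 (Real.sqrt 2)
  (by simp)
  (by unfold u3; rw [smul_smul, s2inv, one_smul]; abel)
  ind_qi_u3)

lemma m1qi : 1 + qi ∈ M14 := MU_step mqi one_mem U14_one U14_qi (inter_of 1 1
  (by rw [one_smul]; abel)
  (by rw [one_smul])
  ind_one_qi)

lemma m1mqi : 1 - qi ∈ M14 := MU_step one_mem zero_mem U14_qi U14_u3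
  (inter_of (-1) (-(Real.sqrt 2))
  (by rw [neg_one_smul]; abel)
  (by unfold u3; rw [smul_smul, neg_mul, s2inv, neg_one_smul]; abel)
  ind_qi_u3)

lemma mmqi : -qi ∈ M14 := MU_step zero_mem m1mqi U14_qi U14_one (inter_of (-1) (-1)
  (by rw [neg_one_smul]; abel)
  (by rw [neg_one_smul]; abel)
  ind_qi_one)

lemma mm1 : (-1 : ℍ[ℝ]) ∈ M14 := MU_step zero_mem mmqi U14_one U14_u3
  (inter_of (-1) (Real.sqrt 2)
  (by rw [neg_one_smul]; abel)
  (by unfold u3; rw [smul_smul, s2inv, one_smul]; abel)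
  ind_one_u3)

lemma m2 : (1 : ℍ[ℝ]) + 1 ∈ M14 := MU_step one_mem m1qi U14_one U14_u3
  (inter_of 1 (-(Real.sqrt 2))
  (by rw [one_smul])
  (by unfold u3; rw [smul_smul, neg_mul, s2inv, neg_one_smul]; abel)
  ind_one_u3)

lemma mqj : qj ∈ M14 := MU_step zero_mem one_mem U14_qj U14_u5 (inter_of 1 (Real.sqrt 2)
  (by simp)
  (by unfold u5; rw [smul_smul, s2inv, one_smul]; abel)
  ind_qj_u5)

lemma m1qj : 1 + qj ∈ M14 := MU_step mqj one_mem U14_one U14_qj (inter_of 1 1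
  (by rw [one_smul]; abel)
  (by rw [one_smul])
  ind_one_qj)

lemma m1mqj : 1 - qj ∈ M14 := MU_step one_mem zero_mem U14_qj U14_u5
  (inter_of (-1) (-(Real.sqrt 2))
  (by rw [neg_one_smul]; abel)
  (by unfold u5; rw [smul_smul, neg_mul, s2inv, neg_one_smul]; abel)
  ind_qj_u5)

lemma mmqj : -qj ∈ M14 := MU_step zero_mem m1mqj U14_qj U14_one (inter_of (-1) (-1)
  (by rw [neg_one_smul]; abel)
  (by rw [neg_one_smul]; abel)
  ind_qj_one)

lemma mhur : hur ∈ M14 := MU_step zero_mem one_mem U14_hur U14_u7 (inter_of 1 (-1)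
  (by rw [one_smul]; abel)
  (by rw [u7_eq, neg_one_smul]; abel)
  ind_hur_u7)

lemma m1mhur : 1 - hur ∈ M14 := MU_step one_mem zero_mem U14_hur U14_u7 (inter_of (-1) 1
  (by rw [neg_one_smul]; abel)
  (by rw [u7_eq, one_smul]; abel)
  ind_hur_u7)

lemma m1hur : 1 + hur ∈ M14 := MU_step mhur one_mem U14_one U14_hur (inter_of 1 1
  (by rw [one_smul]; abel)
  (by rw [one_smul])
  ind_one_hur)

lemma mmhur : -hur ∈ M14 := MU_step zero_mem m1mhur U14_hur U14_one (inter_of (-1) (-1)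
  (by rw [neg_one_smul]; abel)
  (by rw [neg_one_smul]; abel)
  ind_hur_one)

lemma L_subset_M14 : L ⊆ M14 := by
  have t1p := MU_translate one_mem m2
  have t1m := MU_translate_neg mm1 (by simpa using zero_mem)
  have tqip := MU_translate mqi m1qi
  have tqim := MU_translate_neg mmqi m1mqi
  have tqjp := MU_translate mqj m1qj
  have tqjm := MU_translate_neg mmqj m1mqj
  have thp := MU_translate mhur m1hur
  have thm := MU_translate_neg mmhur m1mhur
  rintro z ⟨A, B, C, D, rfl⟩
  have s1 := MU_zsmul t1p t1m A 0 zero_mem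
  have s2 := MU_zsmul tqip tqim B _ s1
  have s3 := MU_zsmul tqjp tqjm C _ s2
  have s4 := MU_zsmul thp thm D _ s3
  have e : (A : ℝ) • (1 : ℍ[ℝ]) + (B : ℝ) • qi + (C : ℝ) • qj + (D : ℝ) • hur
      = 0 + (A : ℝ) • (1 : ℍ[ℝ]) + (B : ℝ) • qi + (C : ℝ) • qj + (D : ℝ) • hur := by
    rw [zero_add]
  rw [e]
  exact s4

lemma M14_subset_L : M14 ⊆ L := by
  have key : ∀ k, ∀ z, z ∈ Mseq U14 1 k → z ∈ L := by
    intro k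
    induction k with
    | zero =>
      intro z hk
      rw [Mseq_zero] at hk
      simp only [Set.mem_insert_iff, Set.mem_singleton_iff] at hk
      rcases hk with rfl | rfl
      · exact ⟨0, 0, 0, 0, by simp⟩
      · exact ⟨1, 0, 0, 0, by simp⟩
    | succ k ih =>
      intro z hk
      rw [Mseq_succ] at hk
      obtain ⟨p, hp, q, hq, α, hα, β, hβ, h⟩ := hk
      exact L_step (ih p hp) (ih q hq) hα hβ h
  intro z hz
  obtain ⟨k, hk⟩ := Set.mem_iUnion.mp hz
  exact key k z hk

end Origami14

theorem stmt14 :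
    MU ({1, qi, (Real.sqrt 2)⁻¹ • (qi - 1), qj, (Real.sqrt 2)⁻¹ • (qj - 1),
        hur, (2 : ℝ)⁻¹ • (1 - qi - qj - qk)} : Set ℍ[ℝ]) 1 =
      {z : ℍ[ℝ] | ∃ a b c d : ℤ,
        z = (a : ℝ) • 1 + (b : ℝ) • qi + (c : ℝ) • qj + (d : ℝ) • hur} := by
  show Origami14.M14 = Origami14.L
  exact Set.Subset.antisymm Origami14.M14_subset_L Origami14.L_subset_M14
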